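/- Let p be a prime with p > 2 and let z ∈ ZMod p. Then there exist x, y ∈ ZMod p such that x² + y² + z² = x*y*z if and only if either (z ≠ 2 and z ≠ -2) or -1 is a square in ZMod p. -/

import Mathlib

open Polynomial FiniteField in
lemma markoff_conic (p : ℕ) [hp : Fact p.Prime] (hp2 : 2 < p) (c d : ZMod p) (hc : c ≠ 0) :
    ∃ u y : ZMod p, u ^ 2 + c * y ^ 2 = d := by
  have hodd : p % 2 = 1 := by
    rcases hp.1.eq_two_or_odd with h | h
    · omega
    · exact h
  let f : (ZMod p)[X] := X ^ 2 - C d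
  let g : (ZMod p)[X] := C c * X ^ 2
  obtain ⟨a, b, hab⟩ : ∃ a b, f.eval a + g.eval b = 0 :=
    exists_root_sum_quadratic (f := f) (g := g)
      (degree_X_pow_sub_C (by norm_num) _)
      (by rw [degree_C_mul_X_pow _ hc]; norm_cast)
      (by rw [ZMod.card, hodd])
  refine ⟨a, b, ?_⟩
  simp only [f, g, eval_add, eval_sub, eval_mul, eval_pow, eval_X, eval_C] at hab
  linear_combination hab

theorem markoff_coord_exists (p : ℕ) [Fact p.Prime] (hp : 2 < p) (z : ZMod p) :
    (∃ x y : ZMod p, x ^ 2 + y ^ 2 + z ^ 2 = x * y * z) ↔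
      ((z ≠ 2 ∧ z ≠ -2) ∨ IsSquare (-1 : ZMod p)) := by
  have h2 : (2 : ZMod p) ≠ 0 := by
    intro h
    have h' : ((2 : ℕ) : ZMod p) = 0 := by exact_mod_cast h
    rw [ZMod.natCast_eq_zero_iff] at h'
    have := Nat.le_of_dvd (by norm_num) h'
    omega
  constructor
  · rintro ⟨x, y, h⟩
    by_cases hz2 : z = 2
    · right
      subst hz2
      refine ⟨(x - y) / 2, ?_⟩
      field_simp
      linear_combination -h
    by_cases hz2' : z = -2
    · right
      subst hz2'
      refine ⟨(x + y) / 2, ?_⟩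
      field_simp
      linear_combination -h
    · exact Or.inl ⟨hz2, hz2'⟩
  · rintro h
    by_cases hz2 : z = 2 ∨ z = -2
    · have hsq : IsSquare (-1 : ZMod p) := by
        rcases h with ⟨ha, hb⟩ | h
        · rcases hz2 with h' | h' <;> simp_all
        · exact h
      obtain ⟨i, hi⟩ := hsq
      refine ⟨2 * i, 0, ?_⟩
      have hz4 : z ^ 2 = 4 := by rcases hz2 with h' | h' <;> subst h' <;> ring
      rw [hz4]
      linear_combination -4 * hi
    · push_neg at hz2
      obtain ⟨hz2, hz2'⟩ := hz2
      have hc : (4 - z ^ 2 : ZMod p) ≠ 0 := by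
        intro h0
        have : (2 - z) * (2 + z) = 0 := by linear_combination h0
        rcases mul_eq_zero.mp this with h' | h'
        · exact hz2 (by linear_combination -h')
        · exact hz2' (by linear_combination h')
      obtain ⟨u, y, huy⟩ := markoff_conic p hp (4 - z ^ 2) (-4 * z ^ 2) hc
      refine ⟨(u + y * z) / 2, y, ?_⟩
      field_simp
      linear_combination huy
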